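/- The operator A defined on L^p([0,1]) by A[X](z) = v(∫₀¹ U(X(z)-X(ζ)) dζ - λz) is Lipschitz continuous with Lipschitz constant 2^((p+1)/p) · Lip(v) · Lip(U) for 1 ≤ p < ∞. -/

import Mathlib

open MeasureTheory

lemma two_rpow_aux {a b p : ℝ} (ha : 0 ≤ a) (hb : 0 ≤ b) (hp : 1 ≤ p) :
    (a + b) ^ p ≤ 2 ^ (p - 1) * (a ^ p + b ^ p) := by
  have h := NNReal.rpow_add_le_mul_rpow_add_rpow a.toNNReal b.toNNReal hp
  have h2 := (NNReal.coe_le_coe).2 h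
  push_cast at h2
  rwa [Real.coe_toNNReal a ha, Real.coe_toNNReal b hb] at h2

/-- The operator `A[X](z) = v(∫₀¹ U(X(z)-X(ζ)) dζ - λ z)` is Lipschitz on `L^p([0,1])`
with constant `2^((p+1)/p) · Lip(v) · Lip(U)`, for `1 ≤ p < ∞`. -/
theorem stmt_0 (p Lv LU lam : ℝ) (hp : 1 ≤ p) (hLv : 0 ≤ Lv) (hLU : 0 ≤ LU) (hlam : 0 < lam)
    (v U : ℝ → ℝ)
    (hv : ∀ a b : ℝ, |v a - v b| ≤ Lv * |a - b|)
    (hU : ∀ a b : ℝ, |U a - U b| ≤ LU * |a - b|)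
    (A : (ℝ → ℝ) → ℝ → ℝ)
    (hA : ∀ X z, A X z = v ((∫ ζ in (0:ℝ)..1, U (X z - X ζ)) - lam * z))
    (X₁ X₂ : ℝ → ℝ) (hX₁ : Measurable X₁) (hX₂ : Measurable X₂)
    (hint : IntegrableOn (fun z => |X₁ z - X₂ z| ^ p) (Set.Icc (0:ℝ) 1)) :
    (∫ z in Set.Icc (0:ℝ) 1, |A X₁ z - A X₂ z| ^ p) ^ (1/p) ≤
      (2 : ℝ) ^ ((p + 1) / p) * Lv * LU *
        (∫ z in Set.Icc (0:ℝ) 1, |X₁ z - X₂ z| ^ p) ^ (1/p) := by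
  have hp0 : (0:ℝ) < p := lt_of_lt_of_le one_pos hp
  set d : ℝ → ℝ := fun z => |X₁ z - X₂ z| with hd
  have hd_meas : Measurable d := (hX₁.sub hX₂).abs
  have hd_nonneg : ∀ z, 0 ≤ d z := fun z => abs_nonneg _
  have hfin : IsFiniteMeasure (volume.restrict (Set.Icc (0:ℝ) 1)) := by
    constructor
    rw [Measure.restrict_apply_univ]
    simp [Real.volume_Icc]
  -- d is integrable on Icc 0 1
  have hconst : IntegrableOn (fun _ : ℝ => (1:ℝ)) (Set.Icc (0:ℝ) 1) := by
    exact integrableOn_const (by simp [Real.volume_Icc])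
  have hd_int : IntegrableOn d (Set.Icc (0:ℝ) 1) := by
    refine (hconst.add hint).mono' hd_meas.aestronglyMeasurable ?_
    refine Filter.Eventually.of_forall fun z => ?_
    rw [Real.norm_eq_abs, abs_of_nonneg (hd_nonneg z)]
    show d z ≤ 1 + d z ^ p
    rcases le_or_gt (d z) 1 with h | h
    · exact h.trans (le_add_of_nonneg_right (Real.rpow_nonneg (hd_nonneg z) p))
    · have h1 : d z = d z ^ (1:ℝ) := (Real.rpow_one _).symm
      have h2 : d z ^ (1:ℝ) ≤ d z ^ p := Real.rpow_le_rpow_of_exponent_le h.le hp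
      exact (h1.trans_le h2).trans (le_add_of_nonneg_left zero_le_one)
  set I := ∫ z in Set.Icc (0:ℝ) 1, d z with hI
  set J := ∫ z in Set.Icc (0:ℝ) 1, d z ^ p with hJ
  have hI0 : 0 ≤ I := setIntegral_nonneg measurableSet_Icc fun z _ => hd_nonneg z
  have hJ0 : 0 ≤ J := setIntegral_nonneg measurableSet_Icc fun z _ => Real.rpow_nonneg (hd_nonneg z) p
  -- Jensen: I ^ p ≤ J
  have hIJ : I ^ p ≤ J := by
    rcases eq_or_lt_of_le hp with heq | hlt
    · have hJI : J = I := by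
        rw [hJ, hI, ← heq]
        simp [Real.rpow_one]
      rw [hJI, ← heq, Real.rpow_one]
    · have hpq : p.HolderConjugate (Real.conjExponent p) := Real.HolderConjugate.conjExponent hlt
      have hf_meas : AEStronglyMeasurable (fun z => X₁ z - X₂ z)
          (volume.restrict (Set.Icc (0:ℝ) 1)) := (hX₁.sub hX₂).aestronglyMeasurable
      have hop : ENNReal.ofReal p ≠ 0 := by simp [ENNReal.ofReal_pos, hp0]
      have h1 : MemLp (fun z => X₁ z - X₂ z) (ENNReal.ofReal p)
          (volume.restrict (Set.Icc (0:ℝ) 1)) := by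
        rw [← memLp_norm_rpow_iff hf_meas hop ENNReal.ofReal_ne_top,
          ENNReal.div_self hop ENNReal.ofReal_ne_top, memLp_one_iff_integrable,
          ENNReal.toReal_ofReal hp0.le]
        simpa [Real.norm_eq_abs, IntegrableOn] using hint
      have hd_mem : MemLp d (ENNReal.ofReal p) (volume.restrict (Set.Icc (0:ℝ) 1)) := by
        have := h1.norm
        simpa [Real.norm_eq_abs, hd] using this
      have hone : MemLp (fun _ : ℝ => (1:ℝ)) (ENNReal.ofReal (Real.conjExponent p))
          (volume.restrict (Set.Icc (0:ℝ) 1)) := memLp_const 1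
      have hH := integral_mul_le_Lp_mul_Lq_of_nonneg hpq
        (Filter.Eventually.of_forall hd_nonneg)
        (Filter.Eventually.of_forall fun _ => zero_le_one) hd_mem hone
      simp only [mul_one, Real.one_rpow] at hH
      have hμ1 : ∫ _ in Set.Icc (0:ℝ) 1, (1:ℝ) = 1 := by
        simp [Real.volume_Icc]
      rw [hμ1, Real.one_rpow, mul_one] at hH
      -- hH : I ≤ J ^ (1/p)
      have h2 : I ^ p ≤ (J ^ (1/p)) ^ p := Real.rpow_le_rpow hI0 hH hp0.le
      rwa [← Real.rpow_mul hJ0, one_div, inv_mul_cancel₀ hp0.ne', Real.rpow_one] at h2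
  -- pointwise bound
  have hUc : Continuous U := by
    have : LipschitzWith (Real.toNNReal LU) U := by
      intro a b
      rw [edist_dist, edist_dist, Real.dist_eq, Real.dist_eq]
      have h1 : |U a - U b| ≤ LU * |a - b| := hU a b
      have h2 : LU * |a - b| ≤ (Real.toNNReal LU : ℝ) * |a - b| :=
        mul_le_mul_of_nonneg_right (Real.le_coe_toNNReal LU) (abs_nonneg _)
      calc ENNReal.ofReal |U a - U b| ≤ ENNReal.ofReal ((Real.toNNReal LU : ℝ) * |a - b|) :=
            ENNReal.ofReal_le_ofReal (h1.trans h2)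
        _ = (Real.toNNReal LU) * ENNReal.ofReal |a - b| := by
            rw [ENNReal.ofReal_mul (by positivity), ENNReal.ofReal_coe_nnreal]
    exact this.continuous
  have hd_ii : IntervalIntegrable d volume 0 1 := by
    rw [intervalIntegrable_iff_integrableOn_Ioc_of_le zero_le_one]
    exact hd_int.mono_set Set.Ioc_subset_Icc_self
  have hI' : ∫ ζ in (0:ℝ)..1, d ζ = I := by
    rw [intervalIntegral.integral_of_le zero_le_one, ← integral_Icc_eq_integral_Ioc]
  have key : ∀ z, |A X₁ z - A X₂ z| ≤ Lv * (LU * (d z + I)) := by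
    intro z
    rw [hA, hA]
    refine le_trans (hv _ _) (mul_le_mul_of_nonneg_left ?_ hLv)
    have harg : (∫ ζ in (0:ℝ)..1, U (X₁ z - X₁ ζ)) - lam * z -
        ((∫ ζ in (0:ℝ)..1, U (X₂ z - X₂ ζ)) - lam * z) =
        (∫ ζ in (0:ℝ)..1, U (X₁ z - X₁ ζ)) - (∫ ζ in (0:ℝ)..1, U (X₂ z - X₂ ζ)) := by ring
    rw [harg]
    set f₁ : ℝ → ℝ := fun ζ => U (X₁ z - X₁ ζ) with hf₁
    set f₂ : ℝ → ℝ := fun ζ => U (X₂ z - X₂ ζ) with hf₂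
    set g : ℝ → ℝ := fun ζ => f₁ ζ - f₂ ζ with hg
    have hg_bound : ∀ ζ, |g ζ| ≤ LU * d z + LU * d ζ := by
      intro ζ
      have h1 : |g ζ| ≤ LU * |(X₁ z - X₁ ζ) - (X₂ z - X₂ ζ)| := hU _ _
      have h2 : |(X₁ z - X₁ ζ) - (X₂ z - X₂ ζ)| ≤ d z + d ζ := by
        have : (X₁ z - X₁ ζ) - (X₂ z - X₂ ζ) = (X₁ z - X₂ z) - (X₁ ζ - X₂ ζ) := by ring
        rw [this]
        exact (abs_sub _ _)
      calc |g ζ| ≤ LU * (d z + d ζ) := h1.trans (mul_le_mul_of_nonneg_left h2 hLU)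
        _ = LU * d z + LU * d ζ := by ring
    have hbound_ii : IntervalIntegrable (fun ζ => LU * d z + LU * d ζ) volume 0 1 :=
      intervalIntegrable_const.add (hd_ii.const_mul LU)
    have hbound_val : ∫ ζ in (0:ℝ)..1, (LU * d z + LU * d ζ) = LU * d z + LU * I := by
      rw [intervalIntegral.integral_add intervalIntegrable_const (hd_ii.const_mul LU),
        intervalIntegral.integral_const, intervalIntegral.integral_const_mul, hI']
      simp
    have hg_meas : Measurable g :=
      (hUc.measurable.comp (measurable_const.sub hX₁)).sub
        (hUc.measurable.comp (measurable_const.sub hX₂))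
    have hg_ii : IntervalIntegrable g volume 0 1 := by
      rw [intervalIntegrable_iff_integrableOn_Ioc_of_le zero_le_one]
      have hb : IntegrableOn (fun ζ => LU * d z + LU * d ζ) (Set.Ioc (0:ℝ) 1) volume :=
        ((integrableOn_const (by simp [Real.volume_Ioc])).add
          ((hd_int.mono_set Set.Ioc_subset_Icc_self).const_mul LU))
      exact hb.mono' hg_meas.aestronglyMeasurable
        (Filter.Eventually.of_forall fun ζ => by rw [Real.norm_eq_abs]; exact hg_bound ζ)
    have habs : |∫ ζ in (0:ℝ)..1, g ζ| ≤ LU * d z + LU * I := by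
      have := intervalIntegral.norm_integral_le_abs_of_norm_le (μ := volume) (f := g) (a := 0) (b := 1)
        (g := fun ζ => LU * d z + LU * d ζ)
        (Filter.Eventually.of_forall fun t => by rw [Real.norm_eq_abs]; exact hg_bound t)
        hbound_ii
      rw [Real.norm_eq_abs, hbound_val] at this
      refine this.trans (le_of_eq (abs_of_nonneg ?_))
      have := hd_nonneg z
      positivity
    have hfinal : |(∫ ζ in (0:ℝ)..1, f₁ ζ) - ∫ ζ in (0:ℝ)..1, f₂ ζ| ≤ LU * (d z + I) := by
      by_cases h₁ : IntervalIntegrable f₁ volume 0 1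
      · have h₂ : IntervalIntegrable f₂ volume 0 1 := by
          have := h₁.sub hg_ii
          have he : (fun ζ => f₁ ζ - g ζ) = f₂ := by funext ζ; simp [hg]
          rwa [he] at this
        rw [← intervalIntegral.integral_sub h₁ h₂]
        calc |∫ ζ in (0:ℝ)..1, (f₁ ζ - f₂ ζ)| = |∫ ζ in (0:ℝ)..1, g ζ| := rfl
          _ ≤ LU * d z + LU * I := habs
          _ = LU * (d z + I) := by ring
      · have h₂ : ¬ IntervalIntegrable f₂ volume 0 1 := by
          intro h
          apply h₁
          have := h.add hg_ii
          have he : (fun ζ => f₂ ζ + g ζ) = f₁ := by funext ζ; simp [hg]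
          rwa [he] at this
        rw [intervalIntegral.integral_undef h₁, intervalIntegral.integral_undef h₂]
        simp only [sub_zero, abs_zero]
        have := hd_nonneg z
        positivity
    exact hfinal
  -- integral chain
  have hCp : 0 ≤ Lv * LU := mul_nonneg hLv hLU
  have hpt : ∀ z, |A X₁ z - A X₂ z| ^ p ≤ (Lv * LU) ^ p * (2 ^ (p-1) * (d z ^ p + I ^ p)) := by
    intro z
    have h1 : |A X₁ z - A X₂ z| ^ p ≤ (Lv * LU * (d z + I)) ^ p := by
      refine Real.rpow_le_rpow (abs_nonneg _) ?_ hp0.le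
      calc |A X₁ z - A X₂ z| ≤ Lv * (LU * (d z + I)) := key z
        _ = Lv * LU * (d z + I) := by ring
    refine h1.trans ?_
    rw [Real.mul_rpow hCp (add_nonneg (hd_nonneg z) hI0)]
    exact mul_le_mul_of_nonneg_left (two_rpow_aux (hd_nonneg z) hI0 hp)
      (Real.rpow_nonneg hCp p)
  have hg_int : Integrable (fun z => (Lv * LU) ^ p * (2 ^ (p-1) * (d z ^ p + I ^ p)))
      (volume.restrict (Set.Icc (0:ℝ) 1)) := by
    exact (((hint.add (integrable_const (I ^ p))).const_mul _).const_mul _)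
  have hmono : ∫ z in Set.Icc (0:ℝ) 1, |A X₁ z - A X₂ z| ^ p ≤
      ∫ z in Set.Icc (0:ℝ) 1, (Lv * LU) ^ p * (2 ^ (p-1) * (d z ^ p + I ^ p)) :=
    integral_mono_of_nonneg
      (Filter.Eventually.of_forall fun z => Real.rpow_nonneg (abs_nonneg _) p)
      hg_int (Filter.Eventually.of_forall hpt)
  have hRHS : ∫ z in Set.Icc (0:ℝ) 1, (Lv * LU) ^ p * (2 ^ (p-1) * (d z ^ p + I ^ p)) =
      (Lv * LU) ^ p * (2 ^ (p-1) * (J + I ^ p)) := by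
    rw [integral_const_mul, integral_const_mul,
      integral_add hint (integrable_const (I ^ p)), setIntegral_const]
    simp [Real.volume_Icc]
    exact Or.inl (Or.inl rfl)
  have hmain : ∫ z in Set.Icc (0:ℝ) 1, |A X₁ z - A X₂ z| ^ p ≤ (2 * (Lv * LU)) ^ p * J := by
    have h2p : (2:ℝ) ^ (p-1) = 2 ^ p / 2 := by
      rw [Real.rpow_sub two_pos, Real.rpow_one]
    calc ∫ z in Set.Icc (0:ℝ) 1, |A X₁ z - A X₂ z| ^ p
        ≤ (Lv * LU) ^ p * (2 ^ (p-1) * (J + I ^ p)) := hmono.trans_eq hRHS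
      _ ≤ (Lv * LU) ^ p * (2 ^ (p-1) * (J + J)) := by
          exact mul_le_mul_of_nonneg_left (mul_le_mul_of_nonneg_left
            (add_le_add_right hIJ J) (Real.rpow_nonneg two_pos.le _))
            (Real.rpow_nonneg hCp p)
      _ = (2 * (Lv * LU)) ^ p * J := by
          rw [Real.mul_rpow two_pos.le hCp, h2p]; ring
  have hL0 : 0 ≤ ∫ z in Set.Icc (0:ℝ) 1, |A X₁ z - A X₂ z| ^ p :=
    setIntegral_nonneg measurableSet_Icc fun z _ => Real.rpow_nonneg (abs_nonneg _) p
  have hstep : (∫ z in Set.Icc (0:ℝ) 1, |A X₁ z - A X₂ z| ^ p) ^ (1/p) ≤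
      (2 * (Lv * LU)) * J ^ (1/p) := by
    have h1 : (∫ z in Set.Icc (0:ℝ) 1, |A X₁ z - A X₂ z| ^ p) ^ (1/p) ≤
        ((2 * (Lv * LU)) ^ p * J) ^ (1/p) :=
      Real.rpow_le_rpow hL0 hmain (by positivity)
    refine h1.trans_eq ?_
    rw [Real.mul_rpow (Real.rpow_nonneg (by positivity) p) hJ0,
      ← Real.rpow_mul (by positivity : (0:ℝ) ≤ 2 * (Lv * LU)),
      mul_one_div_cancel hp0.ne', Real.rpow_one]
  refine hstep.trans ?_
  have h2le : (2:ℝ) ≤ 2 ^ ((p+1)/p) := by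
    nth_rewrite 1 [← Real.rpow_one 2]
    refine Real.rpow_le_rpow_of_exponent_le one_le_two ?_
    rw [le_div_iff₀ hp0]
    linarith
  have hJp : 0 ≤ J ^ (1/p) := Real.rpow_nonneg hJ0 _
  calc 2 * (Lv * LU) * J ^ (1/p) ≤ 2 ^ ((p+1)/p) * (Lv * LU) * J ^ (1/p) := by
        refine mul_le_mul_of_nonneg_right (mul_le_mul_of_nonneg_right h2le hCp) hJp
    _ = 2 ^ ((p+1)/p) * Lv * LU * J ^ (1/p) := by ring
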